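/- Let (X,Y) be a t-structure in a Krull–Schmidt k-linear triangulated category T, and let x₁ ⊕ x₂ → t → y → Σ(x₁⊕x₂) be the truncation triangle of an object t with x₁ indecomposable and nonzero. If dim_k Hom_T(x₁, t) = 1, then the multiplicity of x₁ as a direct summand of x₁ ⊕ x₂ is exactly one, i.e. x₁ is not a direct summand of x₂. -/

import Mathlib

open CategoryTheory Limits Pretriangulated

universe v u

/-- A t-structure in a triangulated category `C`: a pair of strictly full (i.e. closed
under isomorphism) subcategories `(X, Y)` with `ΣX ⊆ X`, `Hom(X, Y) = 0` and truncation
triangles for every object. -/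
structure TStruct (C : Type u) [Category.{v} C] [Preadditive C] [HasZeroObject C]
    [HasShift C ℤ] [∀ n : ℤ, (shiftFunctor C n).Additive] [Pretriangulated C] where
  X : Set C
  Y : Set C
  X_iso : ∀ ⦃a b : C⦄, (a ≅ b) → a ∈ X → b ∈ X
  Y_iso : ∀ ⦃a b : C⦄, (a ≅ b) → a ∈ Y → b ∈ Y
  shift_mem : ∀ x ∈ X, x⟦(1 : ℤ)⟧ ∈ X
  hom_zero : ∀ ⦃x⦄, x ∈ X → ∀ ⦃y⦄, y ∈ Y → ∀ f : x ⟶ y, f = 0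
  trunc : ∀ t : C, ∃ (x y : C) (f : x ⟶ t) (g : t ⟶ y) (h : y ⟶ x⟦(1 : ℤ)⟧),
    x ∈ X ∧ y ∈ Y ∧ Triangle.mk f g h ∈ distTriang C

/-- In a Krull–Schmidt k-linear triangulated category, if `x₁ ⊞ x₂ → t → y → Σ(x₁ ⊞ x₂)`
is the truncation triangle of `t`, `x₁` is indecomposable and `dim_k Hom(x₁, t) = 1`,
then `x₁` occurs with multiplicity one in `x₁ ⊞ x₂`, i.e. `x₁` is not a direct summand
of `x₂`. -/
theorem summand_multiplicity_one {C : Type u} [Category.{v} C] [Preadditive C]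
    [HasZeroObject C] [HasShift C ℤ] [∀ n : ℤ, (shiftFunctor C n).Additive]
    [Pretriangulated C] [HasFiniteBiproducts C]
    (k : Type*) [Field k] [Linear k C]
    -- Krull–Schmidt hypotheses:
    (hdecomp : ∀ z : C, ∃ (n : ℕ) (f : Fin n → C),
      (∀ i, Indecomposable (f i)) ∧ Nonempty (z ≅ ⨁ f))
    (hlocal : ∀ z : C, Indecomposable z → IsLocalRing (End z))
    (S : TStruct C)
    {x₁ x₂ t y : C} (f₁ : x₁ ⟶ t) (f₂ : x₂ ⟶ t) (g : t ⟶ y)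
    (h : y ⟶ (x₁ ⊞ x₂)⟦(1 : ℤ)⟧)
    (hT : Triangle.mk (biprod.desc f₁ f₂) g h ∈ distTriang C)
    (hx : (x₁ ⊞ x₂) ∈ S.X) (hy : y ∈ S.Y)
    (hx₁ : Indecomposable x₁)
    (hdim : Module.finrank k (x₁ ⟶ t) = 1) :
    ¬ ∃ (s : x₁ ⟶ x₂) (p : x₂ ⟶ x₁), s ≫ p = 𝟙 x₁ := by
  rintro ⟨s, p, hsp⟩
  -- `𝟙 x₁ ≠ 0` since `x₁` is indecomposable (hence nonzero).
  have hid : (𝟙 x₁ : x₁ ⟶ x₁) ≠ 0 := fun h0 => hx₁.1 ((IsZero.iff_id_eq_zero x₁).mpr h0)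
  -- The linear map `Hom(x₁, x₁ ⊞ x₂) → Hom(x₁, t)` given by composition with the
  -- truncation map.
  set L : (x₁ ⟶ x₁ ⊞ x₂) →ₗ[k] (x₁ ⟶ t) := Linear.rightComp k x₁ (biprod.desc f₁ f₂) with hL
  -- Injectivity, using `Hom(X, Y) = 0`.
  have hinj : Function.Injective L := by
    rw [injective_iff_map_eq_zero]
    intro u hu
    have hu' : u ≫ biprod.desc f₁ f₂ = 0 := hu
    set v : x₁ ⊞ x₂ ⟶ x₁ ⊞ x₂ := biprod.fst ≫ u with hv
    have hv0 : v ≫ biprod.desc f₁ f₂ = 0 := by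
      rw [hv, Category.assoc, hu', comp_zero]
    obtain ⟨b, hb⟩ := Triangle.coyoneda_exact₂ _
      (inv_rot_of_distTriang _ hT) v hv0
    have hb1 : (shiftFunctor C (1 : ℤ)).map b ≫
        ((shiftEquiv C (1 : ℤ)).counitIso.hom.app y) = 0 :=
      S.hom_zero (S.shift_mem _ hx) hy _
    have hb2 : (shiftFunctor C (1 : ℤ)).map b = 0 := by
      exact (cancel_mono ((shiftEquiv C (1 : ℤ)).counitIso.hom.app y)).1 (hb1.trans zero_comp.symm)
    have hb0 : b = 0 := (shiftFunctor C (1 : ℤ)).map_injective (by simp [hb2])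
    have hv00 : v = 0 := by rw [hb, hb0, zero_comp]; rfl
    have : u = biprod.inl ≫ v := by rw [hv, biprod.inl_fst_assoc]
    rw [this, hv00, comp_zero]
  -- Surjectivity, using `Hom(X, Y) = 0` and the long exact sequence.
  have hsurj : Function.Surjective L := by
    intro φ
    have hφg : φ ≫ g = 0 := by
      have hdesc : (biprod.desc (φ ≫ g) (0 : x₂ ⟶ y)) = 0 := S.hom_zero hx hy _
      calc φ ≫ g = biprod.inl ≫ biprod.desc (φ ≫ g) 0 := by simp
        _ = 0 := by rw [hdesc, comp_zero]
    obtain ⟨ψ, hψ⟩ := Triangle.coyoneda_exact₂ _ hT φ hφg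
    exact ⟨ψ, hψ.symm⟩
  -- Hence `Hom(x₁, x₁ ⊞ x₂)` is one-dimensional.
  have hdim' : Module.finrank k (x₁ ⟶ x₁ ⊞ x₂) = 1 := by
    rw [← hdim]
    exact (LinearEquiv.ofBijective L ⟨hinj, hsurj⟩).finrank_eq
  -- But it contains the two "independent" elements `biprod.inl` and `s ≫ biprod.inr`.
  have hvne : s ≫ (biprod.inr : x₂ ⟶ x₁ ⊞ x₂) ≠ 0 := by
    intro h0
    have : s = 0 := by
      have := congrArg (fun q => q ≫ (biprod.snd : x₁ ⊞ x₂ ⟶ x₂)) h0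
      simpa using this
    rw [this, zero_comp] at hsp
    exact hid hsp.symm
  obtain ⟨c, hc⟩ := (finrank_eq_one_iff_of_nonzero' (s ≫ (biprod.inr : x₂ ⟶ x₁ ⊞ x₂))
    hvne).1 hdim' (biprod.inl : x₁ ⟶ x₁ ⊞ x₂)
  have := congrArg (fun q => q ≫ (biprod.fst : x₁ ⊞ x₂ ⟶ x₁)) hc
  simp only [Linear.smul_comp, Category.assoc, biprod.inr_fst, comp_zero, smul_zero,
    biprod.inl_fst] at this
  exact hid this.symm
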